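/- Let Γ be a group and let H₁, H₂ : Γ → SU(2) be group homomorphisms such that Tr(H₁(γ)) = Tr(H₂(γ)) for every γ ∈ Γ. Then there exists a single element g₀ ∈ SU(2), independent of γ, such that H₂(γ) = g₀⁻¹ · H₁(γ) · g₀ for all γ ∈ Γ. -/

import Mathlib

/-- `SU2` is the special unitary group SU(2): the group of 2×2 complex unitary
matrices with determinant 1, realized as a subgroup of the unitary group. -/
def SU2 : Subgroup (Matrix.unitaryGroup (Fin 2) ℂ) where
  carrier := {A | (A : Matrix (Fin 2) (Fin 2) ℂ).det = 1}
  one_mem' := by simp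
  mul_mem' := by
    intro a b ha hb
    simp only [Set.mem_setOf_eq] at *
    show ((a : Matrix (Fin 2) (Fin 2) ℂ) * (b : Matrix (Fin 2) (Fin 2) ℂ)).det = 1
    rw [Matrix.det_mul, ha, hb, one_mul]
  inv_mem' := by
    intro a ha
    simp only [Set.mem_setOf_eq] at *
    show ((a⁻¹ : Matrix.unitaryGroup (Fin 2) ℂ) : Matrix (Fin 2) (Fin 2) ℂ).det = 1
    rw [Matrix.UnitaryGroup.inv_val, Matrix.star_eq_conjTranspose, Matrix.det_conjTranspose, ha,
      star_one]

/-- The underlying 2×2 complex matrix of an element of SU(2). -/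
def SU2.toMatrix (g : SU2) : Matrix (Fin 2) (Fin 2) ℂ := g.val.val

/-- The trace of (the matrix of) an element of SU(2). -/
noncomputable def SU2.trace (g : SU2) : ℂ := Matrix.trace (SU2.toMatrix g)

open Matrix Complex

noncomputable section

local notation "M2" => Matrix (Fin 2) (Fin 2) ℂ

lemma star_eq_adjugate (g : M2) (hu : g ∈ unitary M2) (hd : g.det = 1) :
    star g = g.adjugate := by
  have h1 : star g * g = 1 := (Unitary.mem_iff.mp hu).1
  have h2 : g * g.adjugate = 1 := by rw [Matrix.mul_adjugate, hd, one_smul]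
  calc star g = star g * (g * g.adjugate) := by rw [h2, mul_one]
    _ = (star g * g) * g.adjugate := by rw [mul_assoc]
    _ = g.adjugate := by rw [h1, one_mul]

lemma su2_e11 (g : M2) (hu : g ∈ unitary M2) (hd : g.det = 1) :
    g 1 1 = starRingEnd ℂ (g 0 0) := by
  have h := star_eq_adjugate g hu hd
  have := congrFun (congrFun h 0) 0
  rw [Matrix.adjugate_fin_two] at this
  simpa [Matrix.star_apply] using this.symm

lemma su2_e10 (g : M2) (hu : g ∈ unitary M2) (hd : g.det = 1) :
    g 1 0 = - starRingEnd ℂ (g 0 1) := by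
  have h := star_eq_adjugate g hu hd
  have := congrFun (congrFun h 0) 1
  rw [Matrix.adjugate_fin_two] at this
  simp [Matrix.star_apply] at this
  have h2 := congrArg (starRingEnd ℂ) this
  simpa using h2

lemma su2_norm (g : M2) (hu : g ∈ unitary M2) (hd : g.det = 1) :
    g 0 0 * starRingEnd ℂ (g 0 0) + g 0 1 * starRingEnd ℂ (g 0 1) = 1 := by
  have hdet := g.det_fin_two
  rw [hd, su2_e11 g hu hd, su2_e10 g hu hd] at hdet
  linear_combination -hdet

lemma su2_normSq (g : M2) (hu : g ∈ unitary M2) (hd : g.det = 1) :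
    Complex.normSq (g 0 0) + Complex.normSq (g 0 1) = 1 := by
  have h := su2_norm g hu hd
  rw [Complex.mul_conj, Complex.mul_conj] at h
  exact_mod_cast h

lemma su2_eq_one_of_trace (g : M2) (hu : g ∈ unitary M2) (hd : g.det = 1)
    (ht : g.trace = 2) : g = 1 := by
  have htr : g 0 0 + g 1 1 = 2 := by rw [← Matrix.trace_fin_two, ht]
  rw [su2_e11 g hu hd] at htr
  rw [Complex.add_conj] at htr
  have hre : (g 0 0).re = 1 := by
    have h2 : 2 * (g 0 0).re = 2 := by exact_mod_cast htr
    linarith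
  have hns := su2_normSq g hu hd
  have hn0 : Complex.normSq (g 0 0) = (g 0 0).re ^ 2 + (g 0 0).im ^ 2 := by
    simp [Complex.normSq_apply]; ring
  have him : (g 0 0).im = 0 := by nlinarith [Complex.normSq_nonneg (g 0 1), sq_nonneg (g 0 0).im]
  have h00 : g 0 0 = 1 := by
    apply Complex.ext <;> simp [hre, him]
  have h01 : g 0 1 = 0 := by
    rw [← Complex.normSq_eq_zero]
    have : Complex.normSq (g 0 0) = 1 := by rw [hn0, hre, him]; ring
    linarith
  have h10 : g 1 0 = 0 := by rw [su2_e10 g hu hd, h01]; simp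
  have h11 : g 1 1 = 1 := by rw [su2_e11 g hu hd, h00]; simp
  ext i j
  fin_cases i <;> fin_cases j <;> simp [h00, h01, h10, h11, Matrix.one_apply]

lemma neg_mem_unitary (g : M2) (hu : g ∈ unitary M2) : (-g) ∈ unitary M2 := by
  rw [Unitary.mem_iff] at hu ⊢
  simpa using hu

lemma su2_eq_neg_one_of_trace (g : M2) (hu : g ∈ unitary M2) (hd : g.det = 1)
    (ht : g.trace = -2) : g = -1 := by
  have h := su2_eq_one_of_trace (-g) (neg_mem_unitary g hu)
    (by simp [Matrix.det_neg, hd]) (by simp [ht])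
  have : g = -(-g) := by simp
  rw [this, h]

lemma trace_mul_expand (B C : M2) :
    (B * C).trace = B 0 0 * C 0 0 + B 0 1 * C 1 0 + B 1 0 * C 0 1 + B 1 1 * C 1 1 := by
  simp [Matrix.trace_fin_two, Matrix.mul_apply, Fin.sum_univ_two]
  ring

lemma diag_agree (lam : ℂ) (him : lam ≠ starRingEnd ℂ lam) (C C' : M2)
    (h1 : C.trace = C'.trace)
    (h2 : ((!![lam, 0; 0, starRingEnd ℂ lam] : M2) * C).trace
        = ((!![lam, 0; 0, starRingEnd ℂ lam] : M2) * C').trace) :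
    C 0 0 = C' 0 0 ∧ C 1 1 = C' 1 1 := by
  rw [trace_mul_expand, trace_mul_expand] at h2
  rw [Matrix.trace_fin_two, Matrix.trace_fin_two] at h1
  simp only [Matrix.cons_val', Matrix.cons_val_zero, Matrix.cons_val_one, Matrix.head_cons,
    Matrix.empty_val', Matrix.cons_val_fin_one, Matrix.head_fin_const, Matrix.of_apply] at h2
  have hne : lam - starRingEnd ℂ lam ≠ 0 := sub_ne_zero.mpr him
  have h11 : C 1 1 = C' 1 1 := by
    have key : (lam - starRingEnd ℂ lam) * (C 1 1 - C' 1 1) = 0 := by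
      linear_combination lam * h1 - h2
    rcases mul_eq_zero.mp key with h | h
    · exact absurd h hne
    · exact sub_eq_zero.mp h
  constructor
  · linear_combination h1 - h11
  · exact h11


lemma su2_diag (g : M2) (hu : g ∈ unitary M2) (hd : g.det = 1) (lam : ℂ)
    (hsum : lam + starRingEnd ℂ lam = g.trace) (hprod : lam * starRingEnd ℂ lam = 1)
    (him : lam ≠ starRingEnd ℂ lam) :
    ∃ P : M2, P ∈ unitary M2 ∧
      star P * g * P = !![lam, 0; 0, starRingEnd ℂ lam] := by
  have h11 := su2_e11 g hu hd
  have h10 := su2_e10 g hu hd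
  have hnorm := su2_norm g hu hd
  have htr : lam + starRingEnd ℂ lam = g 0 0 + starRingEnd ℂ (g 0 0) := by
    rw [hsum, Matrix.trace_fin_two, h11]
  by_cases hcase : g 0 1 = 0 ∧ g 0 0 = lam
  · refine ⟨1, one_mem _, ?_⟩
    have hg11 : g 1 1 = starRingEnd ℂ lam := by rw [h11, hcase.2]
    have hg10 : g 1 0 = 0 := by rw [h10, hcase.1]; simp
    ext i j
    fin_cases i <;> fin_cases j <;>
      simp [hcase.1, hcase.2, hg10, hg11]
  · set α := g 0 0 with hα
    set β := g 0 1 with hβ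
    set c := lam - α with hc
    have hvne : β ≠ 0 ∨ c ≠ 0 := by
      by_cases hb : β = 0
      · right
        intro hcc
        exact hcase ⟨hb, by rw [sub_eq_zero] at hcc; exact hcc.symm⟩
      · left; exact hb
    set n2 := Complex.normSq β + Complex.normSq c with hn2
    have hn2pos : 0 < n2 := by
      rcases hvne with h | h
      · have := Complex.normSq_pos.mpr h
        have := Complex.normSq_nonneg c
        linarith
      · have := Complex.normSq_pos.mpr h
        have := Complex.normSq_nonneg β
        linarith
    set n := Real.sqrt n2 with hnn
    have hnpos : 0 < n := Real.sqrt_pos.mpr hn2pos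
    have hn2c : ((n : ℂ))⁻¹ * ((n : ℂ))⁻¹ * (n2 : ℂ) = 1 := by
      have hsq : (n : ℝ) * n = n2 := Real.mul_self_sqrt hn2pos.le
      have hne : (n : ℂ) ≠ 0 := by
        simpa using Complex.ofReal_ne_zero.mpr hnpos.ne'
      field_simp
      rw [sq]; exact_mod_cast hsq.symm
    have hcast : (n2 : ℂ) = β * starRingEnd ℂ β + c * starRingEnd ℂ c := by
      rw [Complex.mul_conj, Complex.mul_conj]
      push_cast [hn2]
      ring
    set D : M2 := !![lam, 0; 0, starRingEnd ℂ lam] with hD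
    set Q : M2 := !![β, - starRingEnd ℂ c; c, starRingEnd ℂ β] with hQ
    have hQs : star Q * Q = (n2 : ℂ) • 1 := by
      ext i j
      fin_cases i <;> fin_cases j <;>
        · simp [hQ, Matrix.mul_apply, Fin.sum_univ_two, Matrix.star_apply, Matrix.one_apply,
            hcast]
          ring
    have hQQs : Q * star Q = (n2 : ℂ) • 1 := by
      ext i j
      fin_cases i <;> fin_cases j <;>
        · simp [hQ, Matrix.mul_apply, Fin.sum_univ_two, Matrix.star_apply, Matrix.one_apply,
            hcast]
          ring
    have hgQ : g * Q = Q * D := by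
      ext i j
      fin_cases i <;> fin_cases j
      · simp [hQ, hD, Matrix.mul_apply, Fin.sum_univ_two, hc]
        ring
      · simp [hQ, hD, Matrix.mul_apply, Fin.sum_univ_two, hc, map_sub, ← hα, ← hβ]
        linear_combination hnorm + starRingEnd ℂ lam * htr - hprod
      · simp [hQ, hD, Matrix.mul_apply, Fin.sum_univ_two, h10, h11, hc, map_sub, ← hα, ← hβ]
        linear_combination -hnorm - lam * htr + hprod
      · simp [hQ, hD, Matrix.mul_apply, Fin.sum_univ_two, h10, h11, hc, map_sub, ← hα, ← hβ]
        ring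
    set z : ℂ := ((n : ℂ))⁻¹ with hz
    have hsz : star z = z := by
      rw [Complex.star_def, hz, ← Complex.ofReal_inv]
      exact Complex.conj_ofReal _
    refine ⟨z • Q, ?_, ?_⟩
    · rw [Unitary.mem_iff]
      constructor
      · rw [star_smul, smul_mul_smul_comm, hQs, smul_smul, hsz, hn2c, one_smul]
      · rw [star_smul, smul_mul_smul_comm, hQQs, smul_smul, hsz, hn2c, one_smul]
    · have hkey : star Q * g * Q = (n2 : ℂ) • D := by
        rw [mul_assoc, hgQ, ← mul_assoc, hQs, smul_mul_assoc, one_mul]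
      rw [star_smul, smul_mul_assoc, smul_mul_assoc, mul_smul_comm, hkey, smul_smul, smul_smul,
        hsz, hn2c, one_smul]

lemma exists_lam (t : ℝ) (h : t ^ 2 < 4) :
    ∃ lam : ℂ, lam + starRingEnd ℂ lam = (t : ℂ) ∧ lam * starRingEnd ℂ lam = 1 ∧
      lam ≠ starRingEnd ℂ lam := by
  have h1 : 0 < 1 - (t / 2) ^ 2 := by nlinarith
  set s := Real.sqrt (1 - (t / 2) ^ 2) with hs
  have hs2 : s ^ 2 = 1 - (t / 2) ^ 2 := Real.sq_sqrt h1.le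
  have hspos : 0 < s := Real.sqrt_pos.mpr h1
  refine ⟨⟨t / 2, s⟩, ?_, ?_, ?_⟩
  · rw [Complex.add_conj]
    apply Complex.ext <;> simp <;> ring
  · rw [Complex.mul_conj]
    rw [show ((1 : ℂ)) = ((1 : ℝ) : ℂ) by norm_num]
    congr 1
    rw [Complex.normSq_mk]
    nlinarith
  · intro hEq
    have := congrArg Complex.im hEq
    simp [Complex.conj_im] at this
    linarith

lemma conj_mem_unitary {P g : M2} (hP : P ∈ unitary M2) (hg : g ∈ unitary M2) :
    star P * g * P ∈ unitary M2 :=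
  mul_mem (mul_mem (Unitary.star_mem hP) hg) hP

lemma conj_det {P g : M2} (hP : P ∈ unitary M2) (hd : g.det = 1) :
    (star P * g * P).det = 1 := by
  rw [Matrix.det_mul, Matrix.det_mul, hd, mul_one, ← Matrix.det_mul,
    (Unitary.mem_iff.mp hP).1, Matrix.det_one]

lemma conj_trace {P : M2} (hP : P ∈ unitary M2) (g : M2) :
    (star P * g * P).trace = g.trace := by
  rw [Matrix.trace_mul_cycle, (Unitary.mem_iff.mp hP).2, one_mul]

lemma conj_mul' {P : M2} (hP : P ∈ unitary M2) (a b : M2) :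
    (star P * a * P) * (star P * b * P) = star P * (a * b) * P := by
  have h : P * star P = 1 := (Unitary.mem_iff.mp hP).2
  simp only [mul_assoc]
  rw [show P * (star P * (b * P)) = b * P from by rw [← mul_assoc, h, one_mul]]

lemma assemble (f₁ f₂ : M2) (P Q : M2) (hP : P ∈ unitary M2) (hQ : Q ∈ unitary M2)
    (h : star P * f₁ * P = star Q * f₂ * Q) :
    f₁ * (P * star Q) = (P * star Q) * f₂ := by
  have h1 : P * star P = 1 := (Unitary.mem_iff.mp hP).2
  have h2 : Q * star Q = 1 := (Unitary.mem_iff.mp hQ).2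
  have e := congrArg (fun X => P * X * star Q) h
  simp only [← mul_assoc] at e
  rw [h1, one_mul, mul_assoc _ Q (star Q), h2, mul_one] at e
  rw [← mul_assoc, e]

lemma fix_det (U : M2) (hU : U ∈ unitary M2) :
    ∃ V : M2, V ∈ unitary M2 ∧ V.det = 1 ∧ ∃ μ : ℂ, V = μ • U := by
  set d := U.det with hd
  have hdd : starRingEnd ℂ d * d = 1 := by
    have h := congrArg Matrix.det (Unitary.mem_iff.mp hU).1
    rwa [Matrix.det_mul, Matrix.det_one, Matrix.star_eq_conjTranspose,
      Matrix.det_conjTranspose] at h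
  obtain ⟨μ, hμ⟩ : ∃ μ : ℂ, μ ^ 2 = starRingEnd ℂ d :=
    IsAlgClosed.exists_pow_nat_eq _ zero_lt_two
  have hnd : Complex.normSq d = 1 := by
    have h := congrArg Complex.normSq hdd
    simp [Complex.normSq_conj] at h
    nlinarith [Complex.normSq_nonneg d]
  have hnμ : Complex.normSq μ = 1 := by
    have h2 : Complex.normSq μ ^ 2 = 1 := by
      rw [← map_pow, hμ, Complex.normSq_conj, hnd]
    nlinarith [Complex.normSq_nonneg μ]
  have hμμ : starRingEnd ℂ μ * μ = 1 := by
    rw [mul_comm, Complex.mul_conj, hnμ]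
    norm_num
  refine ⟨μ • U, ?_, ?_, μ, rfl⟩
  · rw [Unitary.mem_iff]
    constructor
    · rw [star_smul, smul_mul_smul_comm, (Unitary.mem_iff.mp hU).1, Complex.star_def,
        hμμ, one_smul]
    · rw [star_smul, smul_mul_smul_comm, (Unitary.mem_iff.mp hU).2, Complex.star_def,
        mul_comm μ (starRingEnd ℂ μ), hμμ, one_smul]
  · rw [Matrix.det_smul, ← hd]
    simp only [Fintype.card_fin]
    rw [hμ]
    exact hdd

lemma key {Γ : Type*} [Group Γ] (f₁ f₂ : Γ → M2)
    (hm₁ : ∀ a b : Γ, f₁ (a * b) = f₁ a * f₁ b)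
    (hu₁ : ∀ γ, f₁ γ ∈ unitary M2) (hd₁ : ∀ γ, (f₁ γ).det = 1)
    (hm₂ : ∀ a b : Γ, f₂ (a * b) = f₂ a * f₂ b)
    (hu₂ : ∀ γ, f₂ γ ∈ unitary M2) (hd₂ : ∀ γ, (f₂ γ).det = 1)
    (htr : ∀ γ, (f₁ γ).trace = (f₂ γ).trace) :
    ∃ U : M2, U ∈ unitary M2 ∧ ∀ γ, f₁ γ * U = U * f₂ γ := by
  by_cases hcent : ∀ γ, (f₁ γ).trace = 2 ∨ (f₁ γ).trace = -2
  · refine ⟨1, one_mem _, fun γ => ?_⟩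
    rw [mul_one, one_mul]
    rcases hcent γ with h | h
    · rw [su2_eq_one_of_trace _ (hu₁ γ) (hd₁ γ) h,
        su2_eq_one_of_trace _ (hu₂ γ) (hd₂ γ) (by rw [← htr γ]; exact h)]
    · rw [su2_eq_neg_one_of_trace _ (hu₁ γ) (hd₁ γ) h,
        su2_eq_neg_one_of_trace _ (hu₂ γ) (hd₂ γ) (by rw [← htr γ]; exact h)]
  · push_neg at hcent
    obtain ⟨a, ha2, ham2⟩ := hcent
    have hta : (f₁ a).trace = ((2 * ((f₁ a) 0 0).re : ℝ) : ℂ) := by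
      rw [Matrix.trace_fin_two, su2_e11 _ (hu₁ a) (hd₁ a), Complex.add_conj]
    set t : ℝ := 2 * ((f₁ a) 0 0).re with htdef
    have ht4 : t ^ 2 < 4 := by
      have h1 : Complex.normSq ((f₁ a) 0 0) ≤ 1 := by
        have := su2_normSq _ (hu₁ a) (hd₁ a)
        nlinarith [Complex.normSq_nonneg ((f₁ a) 0 1)]
      have h2 : ((f₁ a) 0 0).re ^ 2 ≤ 1 := by
        have := Complex.normSq_apply ((f₁ a) 0 0)
        nlinarith [sq_nonneg ((f₁ a) 0 0).im]
      have hne2 : t ≠ 2 := by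
        intro h
        exact ha2 (by rw [hta, h]; norm_num)
      have hnem2 : t ≠ -2 := by
        intro h
        exact ham2 (by rw [hta, h]; norm_num)
      rcases lt_or_eq_of_le (show t ^ 2 ≤ 4 by rw [htdef]; nlinarith) with h | h
      · exact h
      · exfalso
        have hz : (t - 2) * (t + 2) = 0 := by nlinarith
        rcases mul_eq_zero.mp hz with h' | h'
        · exact hne2 (by linarith)
        · exact hnem2 (by linarith)
    obtain ⟨lam, hls, hlp, hlne⟩ := exists_lam t ht4
    have hsum₁ : lam + starRingEnd ℂ lam = (f₁ a).trace := by rw [hls, hta]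
    have hsum₂ : lam + starRingEnd ℂ lam = (f₂ a).trace := by rw [← htr a]; exact hsum₁
    obtain ⟨P₁, hP₁u, hP₁⟩ := su2_diag (f₁ a) (hu₁ a) (hd₁ a) lam hsum₁ hlp hlne
    obtain ⟨P₂, hP₂u, hP₂⟩ := su2_diag (f₂ a) (hu₂ a) (hd₂ a) lam hsum₂ hlp hlne
    set Dm : M2 := !![lam, 0; 0, starRingEnd ℂ lam] with hDm
    set k₁ : Γ → M2 := fun γ => star P₁ * f₁ γ * P₁ with hk₁
    set k₂ : Γ → M2 := fun γ => star P₂ * f₂ γ * P₂ with hk₂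
    have hk₁m : ∀ b c : Γ, k₁ (b * c) = k₁ b * k₁ c := fun b c => by
      simp only [hk₁]; rw [hm₁, ← conj_mul' hP₁u]
    have hk₂m : ∀ b c : Γ, k₂ (b * c) = k₂ b * k₂ c := fun b c => by
      simp only [hk₂]; rw [hm₂, ← conj_mul' hP₂u]
    have hk₁u : ∀ γ, k₁ γ ∈ unitary M2 := fun γ => conj_mem_unitary hP₁u (hu₁ γ)
    have hk₂u : ∀ γ, k₂ γ ∈ unitary M2 := fun γ => conj_mem_unitary hP₂u (hu₂ γ)
    have hk₁d : ∀ γ, (k₁ γ).det = 1 := fun γ => conj_det hP₁u (hd₁ γ)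
    have hk₂d : ∀ γ, (k₂ γ).det = 1 := fun γ => conj_det hP₂u (hd₂ γ)
    have hk₁t : ∀ γ, (k₁ γ).trace = (f₁ γ).trace := fun γ => conj_trace hP₁u _
    have hk₂t : ∀ γ, (k₂ γ).trace = (f₂ γ).trace := fun γ => conj_trace hP₂u _
    have hk₁a : k₁ a = Dm := hP₁
    have hk₂a : k₂ a = Dm := hP₂
    have hktr : ∀ γ, (k₁ γ).trace = (k₂ γ).trace := fun γ => by
      rw [hk₁t, hk₂t, htr]
    have hdiag : ∀ γ, k₁ γ 0 0 = k₂ γ 0 0 ∧ k₁ γ 1 1 = k₂ γ 1 1 := by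
      intro γ
      apply diag_agree lam hlne _ _ (hktr γ)
      calc (!![lam, 0; 0, starRingEnd ℂ lam] * k₁ γ).trace
          = (k₁ (a * γ)).trace := by rw [hk₁m, hk₁a]
        _ = (k₂ (a * γ)).trace := hktr _
        _ = (!![lam, 0; 0, starRingEnd ℂ lam] * k₂ γ).trace := by rw [hk₂m, hk₂a]
    have hoffn : ∀ γ, Complex.normSq (k₁ γ 0 1) = Complex.normSq (k₂ γ 0 1) := by
      intro γ
      have e₁ := su2_normSq _ (hk₁u γ) (hk₁d γ)
      have e₂ := su2_normSq _ (hk₂u γ) (hk₂d γ)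
      have e₀ : Complex.normSq (k₁ γ 0 0) = Complex.normSq (k₂ γ 0 0) := by
        rw [(hdiag γ).1]
      linarith
    by_cases hoff : ∀ γ, k₁ γ 0 1 = 0
    · refine ⟨P₁ * star P₂, mul_mem hP₁u (Unitary.star_mem hP₂u), fun γ => ?_⟩
      apply assemble _ _ _ _ hP₁u hP₂u
      show k₁ γ = k₂ γ
      have h01 : k₂ γ 0 1 = 0 := by
        rw [← Complex.normSq_eq_zero, ← hoffn γ, hoff γ, map_zero]
      ext i j
      fin_cases i <;> fin_cases j
      · exact (hdiag γ).1
      · show k₁ γ 0 1 = k₂ γ 0 1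
        rw [hoff γ, h01]
      · show k₁ γ 1 0 = k₂ γ 1 0
        rw [su2_e10 _ (hk₁u γ) (hk₁d γ), su2_e10 _ (hk₂u γ) (hk₂d γ), hoff γ, h01]
      · exact (hdiag γ).2
    · push_neg at hoff
      obtain ⟨b, hb⟩ := hoff
      have hb' : k₂ b 0 1 ≠ 0 := by
        intro h
        exact hb (by rw [← Complex.normSq_eq_zero, hoffn b, h, map_zero])
      set β : ℂ := k₁ b 0 1 with hβ
      set β' : ℂ := k₂ b 0 1 with hβ'
      set u : ℂ := starRingEnd ℂ (β / β') with huDef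
      have hnsq : Complex.normSq (β / β') = 1 := by
        rw [Complex.normSq_div, ← hoffn b]
        exact div_self (by simpa [Complex.normSq_eq_zero] using hb)
      have huu : u * starRingEnd ℂ u = 1 := by
        calc u * starRingEnd ℂ u = (β / β') * starRingEnd ℂ (β / β') := by
              rw [huDef, Complex.conj_conj, mul_comm]
          _ = ((Complex.normSq (β / β') : ℝ) : ℂ) := Complex.mul_conj _
          _ = 1 := by rw [hnsq]; norm_num
      set D : M2 := !![u, 0; 0, 1] with hD
      have hDu : D ∈ unitary M2 := by
        rw [Unitary.mem_iff]
        constructor <;>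
        · ext i j
          fin_cases i <;> fin_cases j <;>
            simp [hD, Matrix.mul_apply, Fin.sum_univ_two, Matrix.star_apply,
              Matrix.one_apply] <;>
            linear_combination huu
      have hconjD : ∀ M : M2, star D * M * D
          = !![M 0 0, starRingEnd ℂ u * M 0 1; M 1 0 * u, M 1 1] := by
        intro M
        ext i j
        fin_cases i <;> fin_cases j <;>
          simp [hD, Matrix.mul_apply, Fin.sum_univ_two, Matrix.star_apply] <;>
          linear_combination M 0 0 * huu
      set Q₂ : M2 := P₂ * D with hQ₂
      have hQ₂u : Q₂ ∈ unitary M2 := mul_mem hP₂u hDu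
      set k₃ : Γ → M2 := fun γ => star D * k₂ γ * D with hk₃
      have hk₃eq : ∀ γ, k₃ γ = star Q₂ * f₂ γ * Q₂ := by
        intro γ
        simp only [hk₃, hk₂, hQ₂, StarMul.star_mul]
        simp only [mul_assoc]
      have hk₃m : ∀ b c : Γ, k₃ (b * c) = k₃ b * k₃ c := fun b c => by
        simp only [hk₃]; rw [hk₂m, ← conj_mul' hDu]
      have hk₃u : ∀ γ, k₃ γ ∈ unitary M2 := fun γ => conj_mem_unitary hDu (hk₂u γ)
      have hk₃d : ∀ γ, (k₃ γ).det = 1 := fun γ => conj_det hDu (hk₂d γ)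
      have hk₃t : ∀ γ, (k₃ γ).trace = (f₂ γ).trace := fun γ => by
        rw [hk₃]; simp only
        rw [conj_trace hDu, hk₂t]
      have hk₃00 : ∀ γ, k₃ γ 0 0 = k₂ γ 0 0 := fun γ => by
        simp only [hk₃]; rw [hconjD]; simp
      have hk₃11 : ∀ γ, k₃ γ 1 1 = k₂ γ 1 1 := fun γ => by
        simp only [hk₃]; rw [hconjD]; simp
      have hk₃01 : ∀ γ, k₃ γ 0 1 = starRingEnd ℂ u * k₂ γ 0 1 := fun γ => by
        simp only [hk₃]; rw [hconjD]; simp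
      have hk₃a : k₃ a = Dm := by
        simp only [hk₃]; rw [hk₂a, hconjD]
        ext i j
        fin_cases i <;> fin_cases j <;> simp [hDm]
      have hβ₃ : k₃ b 0 1 = β := by
        rw [hk₃01, huDef, Complex.conj_conj, ← hβ', div_mul_cancel₀ _ hb']
      have hB : k₁ b = k₃ b := by
        ext i j
        fin_cases i <;> fin_cases j
        · show k₁ b 0 0 = k₃ b 0 0
          rw [hk₃00]; exact (hdiag b).1
        · show k₁ b 0 1 = k₃ b 0 1
          rw [hβ₃]
        · show k₁ b 1 0 = k₃ b 1 0
          rw [su2_e10 _ (hk₁u b) (hk₁d b), su2_e10 _ (hk₃u b) (hk₃d b), hβ₃]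
        · show k₁ b 1 1 = k₃ b 1 1
          rw [hk₃11]; exact (hdiag b).2
      have hfin : ∀ γ, k₁ γ = k₃ γ := by
        intro γ
        have hdd : k₁ γ 0 0 = k₃ γ 0 0 ∧ k₁ γ 1 1 = k₃ γ 1 1 := by
          refine ⟨?_, ?_⟩
          · rw [hk₃00]; exact (hdiag γ).1
          · rw [hk₃11]; exact (hdiag γ).2
        have hdd1 := hdd.1
        have hdd2 := hdd.2
        have hktr₃ : ∀ δ : Γ, (k₁ δ).trace = (k₃ δ).trace := fun δ => by
          rw [hk₁t, hk₃t, htr]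
        have hE1 : (k₁ b * k₁ γ).trace = (k₁ b * k₃ γ).trace := by
          calc (k₁ b * k₁ γ).trace = (k₁ (b * γ)).trace := by rw [hk₁m]
            _ = (k₃ (b * γ)).trace := hktr₃ _
            _ = (k₃ b * k₃ γ).trace := by rw [hk₃m]
            _ = (k₁ b * k₃ γ).trace := by rw [← hB]
        have hE2 : (Dm * k₁ b * k₁ γ).trace = (Dm * k₁ b * k₃ γ).trace := by
          calc (Dm * k₁ b * k₁ γ).trace = (k₁ (a * b) * k₁ γ).trace := by
                rw [hk₁m a b, hk₁a]
            _ = (k₁ ((a * b) * γ)).trace := by rw [hk₁m (a*b) γ, hk₁m a b]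
            _ = (k₃ ((a * b) * γ)).trace := hktr₃ _
            _ = (k₃ (a * b) * k₃ γ).trace := by rw [hk₃m]
            _ = (Dm * k₁ b * k₃ γ).trace := by rw [hk₃m a b, hk₃a, ← hB]
        have hDmB : Dm * k₁ b = !![lam * k₁ b 0 0, lam * β;
            starRingEnd ℂ lam * k₁ b 1 0, starRingEnd ℂ lam * k₁ b 1 1] := by
          ext i j
          fin_cases i <;> fin_cases j <;>
            simp [hDm, Matrix.mul_apply, Fin.sum_univ_two, hβ]
        rw [hDmB] at hE2
        rw [trace_mul_expand, trace_mul_expand] at hE1 hE2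
        simp only [Matrix.cons_val', Matrix.cons_val_zero, Matrix.cons_val_one, Matrix.head_cons,
          Matrix.empty_val', Matrix.cons_val_fin_one, Matrix.head_fin_const,
          Matrix.of_apply] at hE2
        have hb10 : k₁ b 1 0 ≠ 0 := by
          rw [su2_e10 _ (hk₁u b) (hk₁d b)]
          simp only [ne_eq, neg_eq_zero, map_eq_zero]
          exact hb
        have e01 : k₁ γ 0 1 = k₃ γ 0 1 := by
          have hkey : (lam - starRingEnd ℂ lam) * (k₁ b 1 0) * (k₁ γ 0 1 - k₃ γ 0 1) = 0 := by
            linear_combination lam * hE1 - hE2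
              - (lam - starRingEnd ℂ lam) * (k₁ b 1 1) * hdd2
          rcases mul_eq_zero.mp hkey with h | h
          · rcases mul_eq_zero.mp h with h' | h'
            · exact absurd h' (sub_ne_zero.mpr hlne)
            · exact absurd h' hb10
          · exact sub_eq_zero.mp h
        have e10 : k₁ γ 1 0 = k₃ γ 1 0 := by
          have hkey : β * (k₁ γ 1 0 - k₃ γ 1 0) = 0 := by
            linear_combination hE1 - k₁ b 0 0 * hdd1 - k₁ b 1 0 * e01 - k₁ b 1 1 * hdd2
          rcases mul_eq_zero.mp hkey with h | h
          · exact absurd h hb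
          · exact sub_eq_zero.mp h
        ext i j
        fin_cases i <;> fin_cases j
        · exact hdd1
        · exact e01
        · exact e10
        · exact hdd2
      refine ⟨P₁ * star Q₂, mul_mem hP₁u (Unitary.star_mem hQ₂u), fun γ => ?_⟩
      apply assemble _ _ _ _ hP₁u hQ₂u
      have hfg := hfin γ
      rw [hk₃eq γ] at hfg
      exact hfg


/-- Two `SU(2)`-valued homomorphisms of a group with equal traces differ by
conjugation by a single fixed element `g₀` of `SU(2)`. -/
theorem su2_homs_with_equal_traces_are_conjugate
    {Γ : Type*} [Group Γ] (H₁ H₂ : Γ →* SU2)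
    (h : ∀ γ : Γ, SU2.trace (H₁ γ) = SU2.trace (H₂ γ)) :
    ∃ g₀ : SU2, ∀ γ : Γ, H₂ γ = g₀⁻¹ * H₁ γ * g₀ := by
  classical
  set f₁ : Γ → M2 := fun γ => ((H₁ γ : Matrix.unitaryGroup (Fin 2) ℂ) : M2) with hf₁
  set f₂ : Γ → M2 := fun γ => ((H₂ γ : Matrix.unitaryGroup (Fin 2) ℂ) : M2) with hf₂
  have hm₁ : ∀ a b : Γ, f₁ (a * b) = f₁ a * f₁ b := fun a b => by
    simp only [hf₁, _root_.map_mul]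
    rfl
  have hm₂ : ∀ a b : Γ, f₂ (a * b) = f₂ a * f₂ b := fun a b => by
    simp only [hf₂, _root_.map_mul]
    rfl
  have hu₁ : ∀ γ, f₁ γ ∈ unitary M2 := fun γ => (H₁ γ).1.2
  have hu₂ : ∀ γ, f₂ γ ∈ unitary M2 := fun γ => (H₂ γ).1.2
  have hd₁ : ∀ γ, (f₁ γ).det = 1 := fun γ => (H₁ γ).2
  have hd₂ : ∀ γ, (f₂ γ).det = 1 := fun γ => (H₂ γ).2
  have htr' : ∀ γ, (f₁ γ).trace = (f₂ γ).trace := fun γ => h γ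
  obtain ⟨U, hUu, hUi⟩ := key f₁ f₂ hm₁ hu₁ hd₁ hm₂ hu₂ hd₂ htr'
  obtain ⟨V, hVu, hVd, μ, rfl⟩ := fix_det U hUu
  have hVi : ∀ γ, f₁ γ * (μ • U) = (μ • U) * f₂ γ := fun γ => by
    rw [mul_smul_comm, hUi γ, smul_mul_assoc]
  refine ⟨⟨⟨μ • U, hVu⟩, hVd⟩, fun γ => ?_⟩
  have hfin : star (μ • U) * f₁ γ * (μ • U) = f₂ γ := by
    rw [mul_assoc, hVi γ, ← mul_assoc, (Unitary.mem_iff.mp hVu).1, one_mul]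
  refine Subtype.ext (Subtype.ext ?_)
  show f₂ γ = _
  rw [← hfin]
  rfl

end
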